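/- Let f : ℝ^{n₀} → ℝ^d be computed by a ReLU neural network with L hidden layers having n₁, …, n_L nodes respectively (i.e., f = A_{L+1} ∘ σ ∘ A_L ∘ ⋯ ∘ σ ∘ A₁ with affine maps A_i and componentwise ReLU σ). Then ℝ^{n₀} can be partitioned into at most Π_{i=1}^{L} (Σ_{j=0}^{n₀} C(n_i, j)) convex polyhedral pieces on each of which f is affine. -/
import Mathlib

open Finset

section Cells

variable {E : Type*} [AddCommGroup E] [Module ℝ E]

/-- The sign-pattern cell of a family of affine functionals. -/
def rcell {m : ℕ} (fs : Fin m → (E →ᵃ[ℝ] ℝ)) (s : Fin m → Bool) : Set E :=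
  {x | ∀ i, if s i then 0 ≤ fs i x else fs i x < 0}

lemma rcell_convex {m : ℕ} (fs : Fin m → (E →ᵃ[ℝ] ℝ)) (s : Fin m → Bool) :
    Convex ℝ (rcell fs s) := by
  have h : rcell fs s = ⋂ i, (fs i) ⁻¹' (if s i then Set.Ici (0:ℝ) else Set.Iio 0) := by
    ext x
    simp only [rcell, Set.mem_setOf_eq, Set.mem_iInter, Set.mem_preimage]
    refine forall_congr' fun i => ?_
    by_cases hs : s i <;> simp [hs]
  rw [h]
  refine convex_iInter fun i => Convex.affine_preimage (fs i) ?_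
  by_cases hs : s i <;> simp [hs, convex_Ici, convex_Iio]

lemma mem_rcell_self {m : ℕ} (fs : Fin m → (E →ᵃ[ℝ] ℝ)) (x : E) :
    x ∈ rcell fs (fun i => decide (0 ≤ fs i x)) := by
  intro i
  by_cases h : 0 ≤ fs i x <;> simp [h]
  exact lt_of_not_ge h

lemma rcell_eq_of_mem {m : ℕ} {fs : Fin m → (E →ᵃ[ℝ] ℝ)} {s s' : Fin m → Bool} {x : E}
    (h : x ∈ rcell fs s) (h' : x ∈ rcell fs s') : s = s' := by
  funext i
  have h1 := h i
  have h2 := h' i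
  by_cases hs : s i <;> by_cases hs' : s' i <;> simp [hs, hs'] at h1 h2 ⊢ <;> linarith

lemma pascal_sum (m n : ℕ) :
    ∑ j ∈ range (n + 1 + 1), (m + 1).choose j
      = ∑ j ∈ range (n + 1 + 1), m.choose j + ∑ j ∈ range (n + 1), m.choose j := by
  rw [Finset.sum_range_succ' (fun j => (m + 1).choose j),
    Finset.sum_range_succ' (fun j => m.choose j)]
  simp only [Nat.choose_succ_succ, Finset.sum_add_distrib, Nat.choose_zero_right]
  ring

lemma rcell_count [FiniteDimensional ℝ E] (m : ℕ) :
    ∀ (n : ℕ) (fs : Fin m → (E →ᵃ[ℝ] ℝ)) (S : AffineSubspace ℝ E),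
      Module.finrank ℝ S.direction ≤ n →
      {s : Fin m → Bool | (rcell fs s ∩ S).Nonempty}.ncard
        ≤ ∑ j ∈ range (n + 1), m.choose j := by
  induction m with
  | zero =>
      intro n fs S _
      calc {s : Fin 0 → Bool | (rcell fs s ∩ S).Nonempty}.ncard
          ≤ (Set.univ : Set (Fin 0 → Bool)).ncard :=
            Set.ncard_le_ncard (Set.subset_univ _) Set.finite_univ
        _ = 1 := by simp [Set.ncard_univ, Nat.card_eq_fintype_card]
        _ ≤ _ := by
            have h0 : (0:ℕ) ∈ range (n+1) := by simp
            have := Finset.single_le_sum (f := fun j => Nat.choose 0 j)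
              (fun _ _ => Nat.zero_le _) h0
            simpa using this
  | succ m IH =>
      intro n fs S hS
      set f₀ := fs (Fin.last m) with hf₀
      set g : Fin m → (E →ᵃ[ℝ] ℝ) := fun i => fs i.castSucc with hg
      have hdec : ∀ (s : Fin (m+1) → Bool) (x : E), x ∈ rcell fs s ↔
          (x ∈ rcell g (fun i => s i.castSucc) ∧
            (if s (Fin.last m) then 0 ≤ f₀ x else f₀ x < 0)) := by
        intro s x
        constructor
        · intro h; exact ⟨fun i => h i.castSucc, h (Fin.last m)⟩
        · rintro ⟨h1, h2⟩ i
          refine Fin.lastCases ?_ ?_ i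
          · exact h2
          · intro j; exact h1 j
      set Tp := {t : Fin m → Bool | (rcell g t ∩ S ∩ {x | 0 ≤ f₀ x}).Nonempty} with hTp
      set Tn := {t : Fin m → Bool | (rcell g t ∩ S ∩ {x | f₀ x < 0}).Nonempty} with hTn
      have hA : {s : Fin (m+1) → Bool | (rcell fs s ∩ S).Nonempty}.ncard
          ≤ Tp.ncard + Tn.ncard := by
        set A := {s : Fin (m+1) → Bool | (rcell fs s ∩ S).Nonempty ∧ s (Fin.last m) = true}
        set B := {s : Fin (m+1) → Bool | (rcell fs s ∩ S).Nonempty ∧ s (Fin.last m) = false}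
        have hsub : {s : Fin (m+1) → Bool | (rcell fs s ∩ S).Nonempty} ⊆ A ∪ B := by
          intro s hs
          rcases Bool.eq_false_or_eq_true (s (Fin.last m)) with h | h
          · exact Or.inl ⟨hs, h⟩
          · exact Or.inr ⟨hs, h⟩
        have hAcard : A.ncard ≤ Tp.ncard := by
          refine Set.ncard_le_ncard_of_injOn (fun s => fun i => s i.castSucc) ?_ ?_
            (Set.toFinite _)
          · rintro s ⟨⟨x, hx, hxS⟩, hlast⟩
            rw [hdec] at hx
            refine ⟨x, ⟨hx.1, hxS⟩, ?_⟩
            have := hx.2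
            rw [hlast] at this
            simpa using this
          · rintro s hs s' hs' hss
            funext i
            refine Fin.lastCases ?_ ?_ i
            · rw [hs.2, hs'.2]
            · intro j; exact congrFun hss j
        have hBcard : B.ncard ≤ Tn.ncard := by
          refine Set.ncard_le_ncard_of_injOn (fun s => fun i => s i.castSucc) ?_ ?_
            (Set.toFinite _)
          · rintro s ⟨⟨x, hx, hxS⟩, hlast⟩
            rw [hdec] at hx
            refine ⟨x, ⟨hx.1, hxS⟩, ?_⟩
            have := hx.2
            rw [hlast] at this
            simpa using this
          · rintro s hs s' hs' hss
            funext i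
            refine Fin.lastCases ?_ ?_ i
            · rw [hs.2, hs'.2]
            · intro j; exact congrFun hss j
        calc {s : Fin (m+1) → Bool | (rcell fs s ∩ S).Nonempty}.ncard
            ≤ (A ∪ B).ncard := Set.ncard_le_ncard hsub (Set.toFinite _)
          _ ≤ A.ncard + B.ncard := Set.ncard_union_le _ _
          _ ≤ Tp.ncard + Tn.ncard := Nat.add_le_add hAcard hBcard
      have hunion : (Tp ∪ Tn).ncard + (Tp ∩ Tn).ncard = Tp.ncard + Tn.ncard :=
        Set.ncard_union_add_ncard_inter _ _ (Set.toFinite _) (Set.toFinite _)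
      have hT : (Tp ∪ Tn).ncard ≤ ∑ j ∈ range (n + 1), m.choose j := by
        refine le_trans (Set.ncard_le_ncard ?_ (Set.toFinite _)) (IH n g S hS)
        rintro t (⟨x, hx, _⟩ | ⟨x, hx, _⟩) <;> exact ⟨x, hx⟩
      by_cases hconst : ∀ v ∈ S.direction, f₀.linear v = 0
      · have hempty : Tp ∩ Tn = ∅ := by
          rw [Set.eq_empty_iff_forall_notMem]
          rintro t ⟨⟨x, ⟨_, hx2⟩, hx3⟩, ⟨y, ⟨_, hy2⟩, hy3⟩⟩
          have hmem : x -ᵥ y ∈ S.direction := AffineSubspace.vsub_mem_direction hx2 hy2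
          have h0 := hconst _ hmem
          rw [AffineMap.linearMap_vsub] at h0
          simp only [vsub_eq_sub] at h0
          have : f₀ x = f₀ y := by linarith [sub_eq_zero.mp h0]
          simp only [Set.mem_setOf_eq] at hx3 hy3
          linarith
        calc {s : Fin (m+1) → Bool | (rcell fs s ∩ S).Nonempty}.ncard
            ≤ Tp.ncard + Tn.ncard := hA
          _ = (Tp ∪ Tn).ncard := by rw [← hunion, hempty]; simp
          _ ≤ ∑ j ∈ range (n + 1), m.choose j := hT
          _ ≤ ∑ j ∈ range (n + 1), (m+1).choose j :=
              Finset.sum_le_sum fun j _ => Nat.choose_le_choose j (Nat.le_succ m)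
      · push_neg at hconst
        obtain ⟨v, hv, hv0⟩ := hconst
        let H : AffineSubspace ℝ E :=
          { carrier := {x | f₀ x = 0}
            smul_vsub_vadd_mem' := by
              intro c p₁ p₂ p₃ h₁ h₂ h₃
              simp only [Set.mem_setOf_eq] at h₁ h₂ h₃ ⊢
              rw [AffineMap.map_vadd, map_smul, AffineMap.linearMap_vsub]
              simp [h₁, h₂, h₃] }
        have hHmem : ∀ x : E, x ∈ H ↔ f₀ x = 0 := fun x => Iff.rfl
        have hHdir : H.direction ≤ LinearMap.ker f₀.linear := by
          rw [AffineSubspace.direction_eq_vectorSpan, vectorSpan_def]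
          refine Submodule.span_le.2 ?_
          intro w hw
          rw [Set.mem_vsub] at hw
          obtain ⟨a, ha, b, hb, rfl⟩ := hw
          have ha' : f₀ a = 0 := ha
          have hb' : f₀ b = 0 := hb
          rw [SetLike.mem_coe, LinearMap.mem_ker, AffineMap.linearMap_vsub]
          simp [ha', hb']
        have hK : S.direction ⊓ LinearMap.ker f₀.linear < S.direction := by
          refine lt_of_le_of_ne inf_le_left fun hEq => ?_
          have hv' : v ∈ S.direction ⊓ LinearMap.ker f₀.linear := by rw [hEq]; exact hv
          exact hv0 ((Submodule.mem_inf.mp hv').2)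
        have hrank : Module.finrank ℝ ↥(S.direction ⊓ LinearMap.ker f₀.linear)
            < Module.finrank ℝ S.direction := Submodule.finrank_lt_finrank_of_lt hK
        obtain ⟨n', rfl⟩ : ∃ n', n = n' + 1 := ⟨n - 1, by omega⟩
        have hS' : Module.finrank ℝ (S ⊓ H).direction ≤ n' := by
          have h1 : (S ⊓ H).direction ≤ S.direction ⊓ LinearMap.ker f₀.linear :=
            le_trans (AffineSubspace.direction_inf S H) (inf_le_inf_left _ hHdir)
          have h2 := Submodule.finrank_mono h1
          omega
        have hsplit : (Tp ∩ Tn).ncard ≤ ∑ j ∈ range (n' + 1), m.choose j := by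
          refine le_trans (Set.ncard_le_ncard ?_ (Set.toFinite _)) (IH n' g (S ⊓ H) hS')
          rintro t ⟨⟨x, ⟨hx1, hx2⟩, hx3⟩, ⟨y, ⟨hy1, hy2⟩, hy3⟩⟩
          simp only [Set.mem_setOf_eq] at hx3 hy3
          by_cases hx0 : f₀ x = 0
          · refine ⟨x, hx1, ?_⟩
            rw [AffineSubspace.mem_coe, AffineSubspace.mem_inf_iff]
            exact ⟨hx2, hx0⟩
          · have hx0' : 0 < f₀ x := lt_of_le_of_ne hx3 (Ne.symm hx0)
            have hd : 0 < f₀ x - f₀ y := by linarith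
            set θ : ℝ := f₀ x / (f₀ x - f₀ y) with hθ
            have hθ0 : 0 ≤ θ := div_nonneg hx3 hd.le
            have hθ1 : θ ≤ 1 := by rw [div_le_one hd]; linarith
            set z := AffineMap.lineMap (k := ℝ) x y θ with hz
            have hz1 : z ∈ rcell g t := (rcell_convex g t).lineMap_mem hx1 hy1 ⟨hθ0, hθ1⟩
            have hz2 : z ∈ S := S.convex.lineMap_mem hx2 hy2 ⟨hθ0, hθ1⟩
            have hz3 : f₀ z = 0 := by
              rw [hz, f₀.apply_lineMap, AffineMap.lineMap_apply]
              simp only [vsub_eq_sub, vadd_eq_add, smul_eq_mul, hθ]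
              field_simp
              ring
            refine ⟨z, hz1, ?_⟩
            rw [AffineSubspace.mem_coe, AffineSubspace.mem_inf_iff]
            exact ⟨hz2, hz3⟩
        calc {s : Fin (m+1) → Bool | (rcell fs s ∩ S).Nonempty}.ncard
            ≤ Tp.ncard + Tn.ncard := hA
          _ = (Tp ∪ Tn).ncard + (Tp ∩ Tn).ncard := hunion.symm
          _ ≤ ∑ j ∈ range (n' + 1 + 1), m.choose j + ∑ j ∈ range (n' + 1), m.choose j :=
              Nat.add_le_add hT hsplit
          _ = ∑ j ∈ range (n' + 1 + 1), (m + 1).choose j := (pascal_sum m n').symm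

end Cells

/-- `NetComputes ws n₀ d f` means `f` is computed by a ReLU network with input
dimension `n₀`, hidden layer widths `ws`, and output dimension `d`. -/
def NetComputes : List ℕ → (n₀ d : ℕ) → ((Fin n₀ → ℝ) → (Fin d → ℝ)) → Prop
  | [], n₀, d, f => ∃ A : (Fin n₀ → ℝ) →ᵃ[ℝ] (Fin d → ℝ), f = A
  | m :: ws, n₀, d, f =>
      ∃ (A : (Fin n₀ → ℝ) →ᵃ[ℝ] (Fin m → ℝ)) (g : (Fin m → ℝ) → (Fin d → ℝ)),
        NetComputes ws m d g ∧ f = fun x => g (fun i => max (A x i) 0)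

lemma netComputes_comp {ws : List ℕ} {m n₀ d : ℕ} {g : (Fin m → ℝ) → (Fin d → ℝ)}
    (hg : NetComputes ws m d g) (B : (Fin n₀ → ℝ) →ᵃ[ℝ] (Fin m → ℝ)) :
    NetComputes ws n₀ d (fun x => g (B x)) := by
  cases ws with
  | nil =>
      obtain ⟨A, rfl⟩ := hg
      exact ⟨A.comp B, rfl⟩
  | cons k ws =>
      obtain ⟨A, g', hg', rfl⟩ := hg
      exact ⟨A.comp B, g', hg', rfl⟩

theorem relu_net_affine_pieces (n₀ d : ℕ) (widths : List ℕ)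
    (f : (Fin n₀ → ℝ) → (Fin d → ℝ)) (hf : NetComputes widths n₀ d f) :
    ∃ Ps : Finset (Set (Fin n₀ → ℝ)),
      Ps.card ≤ (widths.map (fun m => ∑ j ∈ Finset.range (n₀ + 1), m.choose j)).prod ∧
      (⋃ P ∈ Ps, P) = Set.univ ∧
      (Ps : Set (Set (Fin n₀ → ℝ))).Pairwise Disjoint ∧
      (∀ P ∈ Ps, Convex ℝ P) ∧
      (∀ P ∈ Ps, ∃ A : (Fin n₀ → ℝ) →ᵃ[ℝ] (Fin d → ℝ), Set.EqOn f A P) := by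
  classical
  induction widths generalizing f d with
  | nil =>
      obtain ⟨A, rfl⟩ := hf
      refine ⟨{Set.univ}, by simp, by simp, by simp, ?_, ?_⟩
      · intro P hP
        rw [Finset.mem_singleton] at hP
        exact hP ▸ convex_univ
      · intro P hP
        exact ⟨A, fun x _ => rfl⟩
  | cons m ws IH =>
      obtain ⟨A, g, hg, rfl⟩ := hf
      set fs : Fin m → ((Fin n₀ → ℝ) →ᵃ[ℝ] ℝ) :=
        fun i => ((LinearMap.proj i : (Fin m → ℝ) →ₗ[ℝ] ℝ).toAffineMap).comp A with hfs
      set Bmap : (Fin m → Bool) → ((Fin n₀ → ℝ) →ᵃ[ℝ] (Fin m → ℝ)) :=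
        fun s => ((LinearMap.pi fun i =>
          if s i then (LinearMap.proj i : (Fin m → ℝ) →ₗ[ℝ] (ℝ)) else 0).toAffineMap).comp A
        with hBmap
      have hBval : ∀ (s : Fin m → Bool) (x : Fin n₀ → ℝ) (i : Fin m),
          Bmap s x i = if s i then A x i else 0 := by
        intro s x i
        by_cases hs : s i <;> simp [hBmap, LinearMap.pi_apply, hs]
      have hrelu : ∀ (s : Fin m → Bool), ∀ x ∈ rcell fs s,
          (fun i => max (A x i) 0) = Bmap s x := by
        intro s x hx
        funext i
        have h := hx i
        rw [hBval]
        by_cases hs : s i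
        · rw [if_pos hs] at h ⊢
          exact max_eq_left h
        · rw [if_neg hs] at h ⊢
          exact max_eq_right h.le
      have hcomp : ∀ s : Fin m → Bool, NetComputes ws n₀ d (fun x => g (Bmap s x)) :=
        fun s => netComputes_comp hg (Bmap s)
      have hIH := fun s : Fin m → Bool => IH d (fun x => g (Bmap s x)) (hcomp s)
      choose Qs h1 h2 h3 h4 h5 using hIH
      have hcount : {s : Fin m → Bool | (rcell fs s).Nonempty}.ncard
          ≤ ∑ j ∈ Finset.range (n₀ + 1), m.choose j := by
        have := rcell_count (E := Fin n₀ → ℝ) m n₀ fs ⊤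
          (by rw [AffineSubspace.direction_top]; simp [Module.finrank_fin_fun])
        simpa [AffineSubspace.top_coe] using this
      set NS : Set (Fin m → Bool) := {s | (rcell fs s).Nonempty} with hNS
      set Sfin : Finset (Fin m → Bool) := (Set.toFinite NS).toFinset with hSfin
      refine ⟨Sfin.biUnion (fun s => (Qs s).image (fun Q => rcell fs s ∩ Q)),
        ?_, ?_, ?_, ?_, ?_⟩
      · rw [List.map_cons, List.prod_cons]
        calc (Sfin.biUnion fun s => (Qs s).image (fun Q => rcell fs s ∩ Q)).card
            ≤ ∑ s ∈ Sfin, ((Qs s).image (fun Q => rcell fs s ∩ Q)).card :=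
              Finset.card_biUnion_le
          _ ≤ ∑ s ∈ Sfin, (List.map (fun m => ∑ j ∈ Finset.range (n₀ + 1), m.choose j) ws).prod := by
              refine Finset.sum_le_sum fun s _ => le_trans (Finset.card_image_le) (h1 s)
          _ = Sfin.card * (List.map (fun m => ∑ j ∈ Finset.range (n₀ + 1), m.choose j) ws).prod := by
              rw [Finset.sum_const, smul_eq_mul]
          _ ≤ (∑ j ∈ Finset.range (n₀ + 1), m.choose j) *
              (List.map (fun m => ∑ j ∈ Finset.range (n₀ + 1), m.choose j) ws).prod := by
              refine Nat.mul_le_mul_right _ ?_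
              rw [hSfin, ← Set.ncard_eq_toFinset_card NS (Set.toFinite NS)]
              exact hcount
      · rw [Set.eq_univ_iff_forall]
        intro x
        set s : Fin m → Bool := fun i => decide (0 ≤ fs i x) with hs
        have hxs : x ∈ rcell fs s := mem_rcell_self fs x
        have hsNS : s ∈ Sfin := by
          rw [hSfin, Set.Finite.mem_toFinset]
          exact ⟨x, hxs⟩
        have hxQ : x ∈ ⋃ Q ∈ Qs s, Q := by rw [h2 s]; trivial
        simp only [Set.mem_iUnion, exists_prop] at hxQ
        obtain ⟨Q, hQ, hxQ⟩ := hxQ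
        simp only [Set.mem_iUnion, exists_prop]
        refine ⟨rcell fs s ∩ Q, ?_, hxs, hxQ⟩
        rw [Finset.mem_biUnion]
        exact ⟨s, hsNS, Finset.mem_image.2 ⟨Q, hQ, rfl⟩⟩
      · intro X hX Y hY hne
        rw [Finset.mem_coe, Finset.mem_biUnion] at hX hY
        obtain ⟨s, _, hX⟩ := hX
        obtain ⟨s', _, hY⟩ := hY
        rw [Finset.mem_image] at hX hY
        obtain ⟨Q, hQ, rfl⟩ := hX
        obtain ⟨Q', hQ', rfl⟩ := hY
        by_cases hss : s = s'
        · subst hss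
          have hQQ : Q ≠ Q' := fun h => hne (by rw [h])
          have := h3 s (Finset.mem_coe.2 hQ) (Finset.mem_coe.2 hQ') hQQ
          exact this.mono Set.inter_subset_right Set.inter_subset_right
        · rw [Set.disjoint_left]
          rintro a ⟨ha1, _⟩ ⟨hb1, _⟩
          exact hss (rcell_eq_of_mem ha1 hb1)
      · intro P hP
        rw [Finset.mem_biUnion] at hP
        obtain ⟨s, _, hP⟩ := hP
        rw [Finset.mem_image] at hP
        obtain ⟨Q, hQ, rfl⟩ := hP
        exact (rcell_convex fs s).inter (h4 s Q hQ)
      · intro P hP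
        rw [Finset.mem_biUnion] at hP
        obtain ⟨s, _, hP⟩ := hP
        rw [Finset.mem_image] at hP
        obtain ⟨Q, hQ, rfl⟩ := hP
        obtain ⟨A', hA'⟩ := h5 s Q hQ
        refine ⟨A', fun x hx => ?_⟩
        show g (fun i => max (A x i) 0) = A' x
        rw [hrelu s x hx.1]
        exact hA' hx.2
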